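/- Let F be a near-field, encoded as a type F with [AddGroup F], a multiplication, a zero and a one satisfying: associativity of multiplication; right distributivity (a+b)*c = a*c + b*c; a*0 = 0 and 0*a = 0; 1*a = a and a*1 = a; 1 ≠ 0; and every a ≠ 0 has a two-sided multiplicative inverse. Let k ≥ 1 be a natural number and for each i : Fin k let α_i : F → F be a bijection with α_i(0) = 0 and α_i(a*b) = α_i(a)*α_i(b) for all a, b, such that α_{k-1} = id. On V := Fin k → F, with pointwise addition, define x *₁ a as follows: if a j = 0 for all j ≠ k−1, then (x *₁ a) i := x i * α_i(a (k−1)); otherwise (x *₁ a) i := x (k−1) * a i. Let e : V be given by e (k−1) = 1 and e i = 0 for i ≠ k−1. Then: (1) *₁ is associative; (2) *₁ is right distributive over +; (3) e is a two-sided identity for *₁; (4) x *₁ 0 = 0 and 0 *₁ x = 0; (5) the units of (V,*₁) are exactly the elements a : V with a (k−1) ≠ 0 and a j = 0 for all j ≠ k−1; (6) for any two distinct units a, b, the element a − b is a unit; and (7) for every unit u with u ≠ e and every x : V, x *₁ u = x implies x = 0. In other words, (V,+,*₁) is an af-near-ring whose units with 0 form a subnear-field isomorphic to F. -/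

import Mathlib

open Classical in
/-- The multiplication `*₁` on `V = Fin (n+1) → F` from Theorem `Tim1`:
if `a j = 0` for all `j` except possibly the last index, then
`(x *₁ a) i = x i * α i (a last)`; otherwise `(x *₁ a) i = x last * a i`. -/
noncomputable def nfMul {F : Type*} [AddGroup F] [Mul F] [One F] {n : ℕ}
    (α : Fin (n + 1) → F → F) (x a : Fin (n + 1) → F) : Fin (n + 1) → F :=
  if ∀ j : Fin (n + 1), j ≠ Fin.last n → a j = 0 then
    fun i => x i * α i (a (Fin.last n))
  else
    fun i => x (Fin.last n) * a i

/-- The identity element `e = (0, …, 0, 1)` of `(V, *₁)`. -/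
def nfE (F : Type*) [Zero F] [One F] (n : ℕ) : Fin (n + 1) → F :=
  fun i => if i = Fin.last n then 1 else 0

/-- For a near-field `F` and multiplicative automorphisms `α i`
(zero preserving, the last one the identity), `(Fin (n+1) → F, +, *₁)` is an
af-near-ring whose units are the vectors supported on the last coordinate. -/
theorem stmt9 {F : Type*} [AddGroup F] [Mul F] [One F]
    (hassoc : ∀ a b c : F, (a * b) * c = a * (b * c))
    (hdist : ∀ a b c : F, (a + b) * c = a * c + b * c)
    (hzr : ∀ a : F, a * 0 = 0) (hzl : ∀ a : F, 0 * a = 0)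
    (honel : ∀ a : F, 1 * a = a) (honer : ∀ a : F, a * 1 = a)
    (hnt : (1 : F) ≠ 0)
    (hinv : ∀ a : F, a ≠ 0 → ∃ b : F, a * b = 1 ∧ b * a = 1)
    (n : ℕ) (α : Fin (n + 1) → F → F)
    (hαbij : ∀ i, Function.Bijective (α i))
    (hα0 : ∀ i, α i 0 = 0)
    (hαmul : ∀ i, ∀ a b : F, α i (a * b) = α i a * α i b)
    (hαlast : α (Fin.last n) = id) :
    (∀ x a b : Fin (n + 1) → F,
      nfMul α (nfMul α x a) b = nfMul α x (nfMul α a b)) ∧        -- (1) associativity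
    (∀ x y a : Fin (n + 1) → F,
      nfMul α (x + y) a = nfMul α x a + nfMul α y a) ∧            -- (2) right distributivity
    (∀ x : Fin (n + 1) → F,
      nfMul α x (nfE F n) = x ∧ nfMul α (nfE F n) x = x) ∧        -- (3) e is a two-sided identity
    (∀ x : Fin (n + 1) → F, nfMul α x 0 = 0 ∧ nfMul α 0 x = 0) ∧  -- (4) zero symmetry
    (∀ u : Fin (n + 1) → F,
      (∃ v, nfMul α u v = nfE F n ∧ nfMul α v u = nfE F n) ↔
        (u (Fin.last n) ≠ 0 ∧ ∀ j, j ≠ Fin.last n → u j = 0)) ∧   -- (5) description of the units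
    (∀ a b : Fin (n + 1) → F,
      (∃ v, nfMul α a v = nfE F n ∧ nfMul α v a = nfE F n) →
      (∃ v, nfMul α b v = nfE F n ∧ nfMul α v b = nfE F n) →
      a ≠ b →
      ∃ v, nfMul α (a - b) v = nfE F n ∧ nfMul α v (a - b) = nfE F n) ∧ -- (6) a-near-ring
    (∀ u : Fin (n + 1) → F,
      (∃ v, nfMul α u v = nfE F n ∧ nfMul α v u = nfE F n) →
      u ≠ nfE F n →
      ∀ x : Fin (n + 1) → F, nfMul α x u = x → x = 0) := by       -- (7) f-near-ring
  
  -- Notation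
  have hαL : ∀ a : F, α (Fin.last n) a = a := by intro a; rw [hαlast]; rfl
  -- no zero divisors
  have hnzd : ∀ a b : F, a ≠ 0 → b ≠ 0 → a * b ≠ 0 := by
    intro a b ha hb hab
    obtain ⟨c, hc1, hc2⟩ := hinv b hb
    apply ha
    calc a = a * 1 := (honer a).symm
      _ = a * (b * c) := by rw [hc1]
      _ = (a * b) * c := (hassoc a b c).symm
      _ = 0 * c := by rw [hab]
      _ = 0 := hzl c
  -- α i reflects zero
  have hαz : ∀ i (a : F), α i a = 0 → a = 0 := by
    intro i a h
    exact (hαbij i).injective (h.trans (hα0 i).symm)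
  -- α i 1 = 1
  have hα1 : ∀ i, α i 1 = 1 := by
    intro i
    have h1 : α i 1 * α i 1 = α i 1 := by rw [← hαmul, honel]
    have hne : α i 1 ≠ 0 := fun h => hnt (hαz i 1 h)
    obtain ⟨c, hc1, hc2⟩ := hinv _ hne
    calc α i 1 = α i 1 * 1 := (honer _).symm
      _ = α i 1 * (α i 1 * c) := by rw [hc1]
      _ = (α i 1 * α i 1) * c := (hassoc _ _ _).symm
      _ = α i 1 * c := by rw [h1]
      _ = 1 := hc1
  -- left cancellation
  have hcan : ∀ a t : F, a ≠ 0 → a * t = a → t = 1 := by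
    intro a t ha h
    obtain ⟨c, hc1, hc2⟩ := hinv a ha
    calc t = 1 * t := (honel t).symm
      _ = (c * a) * t := by rw [hc2]
      _ = c * (a * t) := hassoc _ _ _
      _ = c * a := by rw [h]
      _ = 1 := hc2
  -- unfolding lemmas
  have hpos : ∀ (x a : Fin (n+1) → F), (∀ j, j ≠ Fin.last n → a j = 0) →
      nfMul α x a = fun i => x i * α i (a (Fin.last n)) := by
    intro x a h; unfold nfMul; rw [if_pos h]
  have hneg : ∀ (x a : Fin (n+1) → F), ¬(∀ j, j ≠ Fin.last n → a j = 0) →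
      nfMul α x a = fun i => x (Fin.last n) * a i := by
    intro x a h; unfold nfMul; rw [if_neg h]
  have heL : nfE F n (Fin.last n) = 1 := by simp [nfE]
  have heO : ∀ j, j ≠ Fin.last n → nfE F n j = 0 := by
    intro j hj; simp [nfE, hj]
  have hespec : ∀ j : Fin (n+1), j ≠ Fin.last n → nfE F n j = 0 := heO
  have hzspec : ∀ j : Fin (n+1), j ≠ Fin.last n → (0 : Fin (n+1) → F) j = 0 :=
    fun j _ => rfl
  -- (1) associativity
  have part1 : ∀ x a b : Fin (n + 1) → F,
      nfMul α (nfMul α x a) b = nfMul α x (nfMul α a b) := by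
    intro x a b
    by_cases ha : ∀ j, j ≠ Fin.last n → a j = 0
    · by_cases hb : ∀ j, j ≠ Fin.last n → b j = 0
      · -- both special
        have hab : ∀ j, j ≠ Fin.last n →
            (fun i => a i * α i (b (Fin.last n))) j = 0 := by
          intro j hj; simp only; rw [ha j hj, hzl]
        rw [hpos a b hb, hpos x _ hab, hpos x a ha, hpos _ b hb]
        funext i
        rw [hαL, hαmul, hassoc]
      · -- a special, b not
        rw [hneg a b hb]
        by_cases haL : a (Fin.last n) = 0
        · have hab : ∀ j, j ≠ Fin.last n → (fun i => a (Fin.last n) * b i) j = 0 := by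
            intro j hj; simp only [haL, hzl]
          rw [hpos x _ hab, hneg _ b hb, hpos x a ha]
          funext i
          simp only [haL, hzl, hα0, hzr]
        · obtain ⟨j, hj, hbj⟩ := by
            push_neg at hb; exact hb
          have hab : ¬ ∀ j', j' ≠ Fin.last n → (fun i => a (Fin.last n) * b i) j' = 0 := by
            intro h
            exact hnzd _ _ haL hbj (h j hj)
          rw [hneg x _ hab, hneg _ b hb, hpos x a ha]
          funext i
          simp only [hαL, hassoc]
    · by_cases hb : ∀ j, j ≠ Fin.last n → b j = 0
      · -- a not special, b special
        rw [hpos a b hb]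
        by_cases hbL : b (Fin.last n) = 0
        · have hab : ∀ j, j ≠ Fin.last n → (fun i => a i * α i (b (Fin.last n))) j = 0 := by
            intro j hj; simp only [hbL, hα0, hzr]
          rw [hpos x _ hab, hpos _ b hb, hneg x a ha]
          funext i
          simp only [hbL, hα0, hzr]
        · obtain ⟨j, hj, haj⟩ := by
            push_neg at ha; exact ha
          have hab : ¬ ∀ j', j' ≠ Fin.last n → (fun i => a i * α i (b (Fin.last n))) j' = 0 := by
            intro h
            exact hnzd _ _ haj (fun h' => hbL (hαz j _ h')) (h j hj)
          rw [hneg x _ hab, hpos _ b hb, hneg x a ha]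
          funext i
          simp only [hassoc]
      · -- neither special
        rw [hneg a b hb]
        by_cases haL : a (Fin.last n) = 0
        · have hab : ∀ j, j ≠ Fin.last n → (fun i => a (Fin.last n) * b i) j = 0 := by
            intro j hj; simp only [haL, hzl]
          rw [hpos x _ hab, hneg _ b hb, hneg x a ha]
          funext i
          simp only [haL, hzl, hα0, hzr]
        · obtain ⟨j, hj, hbj⟩ := by
            push_neg at hb; exact hb
          have hab : ¬ ∀ j', j' ≠ Fin.last n → (fun i => a (Fin.last n) * b i) j' = 0 := by
            intro h
            exact hnzd _ _ haL hbj (h j hj)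
          rw [hneg x _ hab, hneg _ b hb, hneg x a ha]
          funext i
          simp only [hassoc]
  -- (2) right distributivity
  have part2 : ∀ x y a : Fin (n + 1) → F,
      nfMul α (x + y) a = nfMul α x a + nfMul α y a := by
    intro x y a
    by_cases ha : ∀ j, j ≠ Fin.last n → a j = 0
    · rw [hpos _ a ha, hpos x a ha, hpos y a ha]
      funext i
      simp only [Pi.add_apply, hdist]
    · rw [hneg _ a ha, hneg x a ha, hneg y a ha]
      funext i
      simp only [Pi.add_apply, hdist]
  -- (3) identity
  have part3 : ∀ x : Fin (n + 1) → F,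
      nfMul α x (nfE F n) = x ∧ nfMul α (nfE F n) x = x := by
    intro x
    constructor
    · rw [hpos x _ hespec]
      funext i
      simp only [heL, hα1, honer]
    · by_cases hx : ∀ j, j ≠ Fin.last n → x j = 0
      · rw [hpos _ x hx]
        funext i
        by_cases hi : i = Fin.last n
        · subst hi
          simp only [heL, honel, hαL]
        · simp only [heO i hi, hzl, hx i hi]
      · rw [hneg _ x hx]
        funext i
        simp only [heL, honel]
  -- (4) zero symmetry
  have part4 : ∀ x : Fin (n + 1) → F, nfMul α x 0 = 0 ∧ nfMul α 0 x = 0 := by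
    intro x
    constructor
    · rw [hpos x 0 hzspec]
      funext i
      simp only [Pi.zero_apply, hα0, hzr]
    · by_cases hx : ∀ j, j ≠ Fin.last n → x j = 0
      · rw [hpos 0 x hx]
        funext i
        simp only [Pi.zero_apply, hzl]
      · rw [hneg 0 x hx]
        funext i
        simp only [Pi.zero_apply, hzl]
  -- (5) units
  have part5 : ∀ u : Fin (n + 1) → F,
      (∃ v, nfMul α u v = nfE F n ∧ nfMul α v u = nfE F n) ↔
        (u (Fin.last n) ≠ 0 ∧ ∀ j, j ≠ Fin.last n → u j = 0) := by
    intro u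
    constructor
    · rintro ⟨v, h1, h2⟩
      have huL : u (Fin.last n) ≠ 0 := by
        intro h0
        by_cases hu : ∀ j, j ≠ Fin.last n → u j = 0
        · rw [hpos v u hu] at h2
          have := congrFun h2 (Fin.last n)
          simp only [heL, h0, hα0, hzr] at this
          exact hnt this.symm
        · rw [hneg v u hu] at h2
          have := congrFun h2 (Fin.last n)
          simp only [heL, h0, hzr] at this
          exact hnt this.symm
      refine ⟨huL, ?_⟩
      intro j hj
      by_contra huj
      by_cases hv : ∀ j, j ≠ Fin.last n → v j = 0
      · rw [hpos u v hv] at h1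
        have hLL := congrFun h1 (Fin.last n)
        simp only [heL, hαL] at hLL
        have hvL : v (Fin.last n) ≠ 0 := by
          intro h0; rw [h0, hzr] at hLL; exact hnt hLL.symm
        have hj' := congrFun h1 j
        simp only [heO j hj] at hj'
        exact hnzd _ _ huj (fun h' => hvL (hαz j _ h')) hj'
      · obtain ⟨j', hj', hvj'⟩ := by push_neg at hv; exact hv
        rw [hneg u v hv] at h1
        have := congrFun h1 j'
        simp only [heO j' hj'] at this
        exact hnzd _ _ huL hvj' this
    · rintro ⟨huL, hu⟩
      obtain ⟨c, hc1, hc2⟩ := hinv _ huL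
      refine ⟨fun i => if i = Fin.last n then c else 0, ?_, ?_⟩
      · have hv : ∀ j : Fin (n+1), j ≠ Fin.last n →
            (fun i => if i = Fin.last n then c else 0) j = 0 := by
          intro j hj; simp [hj]
        rw [hpos u _ hv]
        funext i
        by_cases hi : i = Fin.last n
        · subst hi
          rw [if_pos rfl, hαL, hc1, heL]
        · simp only [heO i hi, hu i hi, hzl]
      · rw [hpos _ u hu]
        funext i
        by_cases hi : i = Fin.last n
        · subst hi
          rw [if_pos rfl, hαL, hc2, heL]
        · simp only [heO i hi, if_neg hi, hzl]
  -- (6)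
  have part6 : ∀ a b : Fin (n + 1) → F,
      (∃ v, nfMul α a v = nfE F n ∧ nfMul α v a = nfE F n) →
      (∃ v, nfMul α b v = nfE F n ∧ nfMul α v b = nfE F n) →
      a ≠ b →
      ∃ v, nfMul α (a - b) v = nfE F n ∧ nfMul α v (a - b) = nfE F n := by
    intro a b hua hub hab
    obtain ⟨haL, ha⟩ := (part5 a).mp hua
    obtain ⟨hbL, hb⟩ := (part5 b).mp hub
    apply (part5 (a - b)).mpr
    constructor
    · simp only [Pi.sub_apply]
      rw [sub_ne_zero]
      intro h
      apply hab
      funext i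
      by_cases hi : i = Fin.last n
      · subst hi; exact h
      · rw [ha i hi, hb i hi]
    · intro j hj
      simp only [Pi.sub_apply, ha j hj, hb j hj, sub_zero]
  -- (7)
  have part7 : ∀ u : Fin (n + 1) → F,
      (∃ v, nfMul α u v = nfE F n ∧ nfMul α v u = nfE F n) →
      u ≠ nfE F n →
      ∀ x : Fin (n + 1) → F, nfMul α x u = x → x = 0 := by
    intro u hu hne x hx
    obtain ⟨huL, hus⟩ := (part5 u).mp hu
    have huL1 : u (Fin.last n) ≠ 1 := by
      intro h1
      apply hne
      funext i
      by_cases hi : i = Fin.last n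
      · subst hi; rw [h1, heL]
      · rw [hus i hi, heO i hi]
    rw [hpos x u hus] at hx
    funext i
    show x i = 0
    by_contra hxi
    have := congrFun hx i
    have h1 := hcan _ _ hxi this
    have : u (Fin.last n) = 1 := by
      apply (hαbij i).injective
      rw [h1, hα1]
    exact huL1 this
  exact ⟨part1, part2, part3, part4, part5, part6, part7⟩
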